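/- For any matrix A ∈ ℝ^{m×n}, any sparsity level k, any p > 0 and 0 < q ≤ 1, the h_{p,q}-null space constant satisfies h_{p,q}(A,k) ≤ h_{ℓ₁}(A,k), where h_{ℓ₁}(A,k) is the analogous null space constant defined with the ℓ₁-norm. -/

import Mathlib

open scoped Classical



lemma core_ineq {p q : ℝ} (hp : 0 < p) (hq0 : 0 < q) (hq1 : q ≤ 1)
    {x y : ℝ} (hx : 0 < x) (hxy : x ≤ y) :
    x * Real.log (1 + y ^ q / p) ≤ y * Real.log (1 + x ^ q / p) := by
  have hy : 0 < y := hx.trans_le hxy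
  set t : ℝ := x / y with ht
  have ht0 : 0 < t := div_pos hx hy
  have ht1 : t ≤ 1 := (div_le_one hy).mpr hxy
  have hty : t * y = x := div_mul_cancel₀ x hy.ne'
  have h1 : t ≤ t ^ q := by
    calc t = t ^ (1:ℝ) := (Real.rpow_one t).symm
    _ ≤ t ^ q := Real.rpow_le_rpow_of_exponent_ge ht0 ht1 hq1
  have h2 : x ^ q = t ^ q * y ^ q := by
    rw [← Real.mul_rpow ht0.le hy.le, hty]
  have h3 : t * (y ^ q) ≤ x ^ q := by
    rw [h2]
    exact mul_le_mul_of_nonneg_right h1 (Real.rpow_nonneg hy.le q)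
  have hu : 0 ≤ y ^ q / p := div_nonneg (Real.rpow_nonneg hy.le q) hp.le
  have h4 : t * Real.log (1 + y ^ q / p) ≤ Real.log (1 + t * (y ^ q / p)) := by
    have m1 : (1 + y ^ q / p) ∈ Set.Ioi (0:ℝ) := by simp only [Set.mem_Ioi]; positivity
    have m2 : (1:ℝ) ∈ Set.Ioi (0:ℝ) := by simp
    have hb : (0:ℝ) ≤ 1 - t := by linarith
    have hab : t + (1 - t) = 1 := by ring
    have := (strictConcaveOn_log_Ioi.concaveOn).2 m1 m2 ht0.le hb hab
    simp only [smul_eq_mul, Real.log_one, mul_zero, add_zero] at this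
    calc t * Real.log (1 + y ^ q / p) ≤ Real.log (t * (1 + y ^ q / p) + (1 - t) * 1) := this
    _ = Real.log (1 + t * (y ^ q / p)) := by ring_nf
  have h5 : Real.log (1 + t * (y ^ q / p)) ≤ Real.log (1 + x ^ q / p) := by
    apply Real.log_le_log (by positivity)
    have h6 : t * (y ^ q / p) ≤ x ^ q / p := by
      rw [mul_div_assoc']
      exact div_le_div_of_nonneg_right h3 hp.le
    linarith [h6]
  calc x * Real.log (1 + y ^ q / p) = y * (t * Real.log (1 + y ^ q / p)) := by
        rw [← mul_assoc, mul_comm y t, hty]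
    _ ≤ y * Real.log (1 + x ^ q / p) := by
        apply mul_le_mul_of_nonneg_left _ hy.le
        exact h4.trans h5

lemma mask_sum {n : ℕ} (v : Fin n → ℝ) (S : Finset (Fin n)) (f : ℝ → ℝ) (hf0 : f 0 = 0) :
    ∑ i, f (if i ∈ S then v i else 0) = ∑ i ∈ S, f (v i) := by
  have : ∀ i, f (if i ∈ S then v i else 0) = if i ∈ S then f (v i) else 0 := by
    intro i; split_ifs <;> simp [hf0]
  simp only [this]
  rw [Finset.sum_ite_mem, Finset.univ_inter]

lemma mem_hpq {m n k : ℕ} {p q : ℝ} (hp : 0 < p) (hq0 : 0 < q) (hq1 : q ≤ 1)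
    {A : Matrix (Fin m) (Fin n) ℝ} {c : ℝ} (hc : 0 ≤ c)
    (h1 : ∀ v : Fin n → ℝ, A.mulVec v = 0 → v ≠ 0 → ∀ S : Finset (Fin n), S.card ≤ k →
      ∑ i ∈ S, |v i| ≤ c * ∑ i ∈ Sᶜ, |v i|) :
    ∀ v : Fin n → ℝ, A.mulVec v = 0 → v ≠ 0 → ∀ S : Finset (Fin n), S.card ≤ k →
      ∑ i ∈ S, Real.log (1 + |v i| ^ q / p) ≤ c * ∑ i ∈ Sᶜ, Real.log (1 + |v i| ^ q / p) := by
  intro v hv hv0 S hS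
  set g : Fin n → ℝ := fun i => Real.log (1 + |v i| ^ q / p) with hg
  have hgnn : ∀ i, 0 ≤ g i := by
    intro i
    apply Real.log_nonneg
    have : 0 ≤ |v i| ^ q / p := by positivity
    linarith
  -- choose a maximizing set S' of the same cardinality
  have hne : (Finset.univ.powersetCard S.card : Finset (Finset (Fin n))).Nonempty :=
    ⟨S, by simp [Finset.mem_powersetCard_univ]⟩
  obtain ⟨S', hS'mem, hmax⟩ := Finset.exists_max_image _ (fun T => ∑ i ∈ T, g i) hne
  have hS'card : S'.card = S.card := (Finset.mem_powersetCard_univ).mp hS'mem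
  have hS'k : S'.card ≤ k := hS'card ▸ hS
  have hA : ∑ i ∈ S, g i ≤ ∑ i ∈ S', g i :=
    hmax S (by simp [Finset.mem_powersetCard_univ])
  have hB : ∑ i ∈ S'ᶜ, g i ≤ ∑ i ∈ Sᶜ, g i := by
    have t1 := Finset.sum_add_sum_compl S g
    have t2 := Finset.sum_add_sum_compl S' g
    linarith
  -- strict monotonicity of g in |v i|
  have hgmono : ∀ i j : Fin n, |v i| < |v j| → g i < g j := by
    intro i j hij
    apply Real.log_lt_log (by positivity)
    have h' : |v i| ^ q < |v j| ^ q := Real.rpow_lt_rpow (abs_nonneg _) hij hq0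
    have h'' : |v i| ^ q / p < |v j| ^ q / p := by gcongr
    linarith
  -- ordering property of the maximizing set
  have horder : ∀ i ∈ S', ∀ j ∈ S'ᶜ, |v j| ≤ |v i| := by
    intro i hi j hj
    by_contra hcon
    push_neg at hcon
    have hjS' : j ∉ S' := Finset.mem_compl.mp hj
    set T : Finset (Fin n) := insert j (S'.erase i) with hT
    have hjT : j ∉ S'.erase i := fun h => hjS' (Finset.mem_of_mem_erase h)
    have hTcard : T.card = S'.card := by
      rw [hT, Finset.card_insert_of_notMem hjT, Finset.card_erase_of_mem hi]
      have : 1 ≤ S'.card := Finset.card_pos.mpr ⟨i, hi⟩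
      omega
    have hTmem : T ∈ Finset.univ.powersetCard S.card := by
      simp [Finset.mem_powersetCard_univ, hTcard, hS'card]
    have hTsum : ∑ x ∈ T, g x = g j + (∑ x ∈ S', g x - g i) := by
      rw [hT, Finset.sum_insert hjT, Finset.sum_erase_eq_sub hi]
    have hgij : g i < g j := hgmono i j hcon
    have := hmax T hTmem
    rw [hTsum] at this
    linarith
  -- trivial case: S' empty
  rcases Finset.eq_empty_or_nonempty S' with hE | hne'
  · have : ∑ i ∈ S, g i ≤ 0 := by
      simpa [hE] using hA
    have h0 : 0 ≤ c * ∑ i ∈ Sᶜ, g i :=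
      mul_nonneg hc (Finset.sum_nonneg fun i _ => hgnn i)
    linarith
  -- main case
  obtain ⟨i0, hi0, hmin⟩ := S'.exists_min_image (fun i => |v i|) hne'
  set a : ℝ := |v i0| with ha
  rcases eq_or_lt_of_le (abs_nonneg (v i0)) with ha0 | ha0
  · -- a = 0 : then v vanishes on S'ᶜ, and the ℓ¹ inequality forces v = 0
    exfalso
    have hz : ∀ j ∈ S'ᶜ, v j = 0 := by
      intro j hj
      have h2 : |v j| ≤ |v i0| := horder i0 hi0 j hj
      have h3 : |v j| ≤ 0 := le_of_le_of_eq h2 ha0.symm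
      simpa [abs_nonpos_iff] using h3
    have hl1 := h1 v hv hv0 S' hS'k
    have hrz : ∑ j ∈ S'ᶜ, |v j| = 0 :=
      Finset.sum_eq_zero fun j hj => by rw [hz j hj, abs_zero]
    rw [hrz, mul_zero] at hl1
    have hzS : ∀ i ∈ S', v i = 0 := by
      intro i hi
      have := Finset.sum_eq_zero_iff_of_nonneg (fun i _ => abs_nonneg (v i)) |>.mp
        (le_antisymm hl1 (Finset.sum_nonneg fun i _ => abs_nonneg (v i)))
      simpa [abs_eq_zero] using this i hi
    apply hv0
    funext i
    by_cases hiS : i ∈ S'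
    · exact hzS i hiS
    · exact hz i (Finset.mem_compl.mpr hiS)
  · -- a > 0
    set r : ℝ := g i0 / a with hr
    have hrnn : 0 ≤ r := div_nonneg (hgnn i0) ha0.le
    have key1 : ∀ i ∈ S', g i ≤ r * |v i| := by
      intro i hi
      have hax : a ≤ |v i| := hmin i hi
      have := core_ineq hp hq0 hq1 ha0 hax
      rw [hr, div_mul_eq_mul_div, le_div_iff₀ ha0]
      calc g i * a = a * Real.log (1 + |v i| ^ q / p) := by rw [hg]; ring
        _ ≤ |v i| * Real.log (1 + a ^ q / p) := this
        _ = g i0 * |v i| := by rw [hg, ha]; ring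
    have key2 : ∀ j ∈ S'ᶜ, r * |v j| ≤ g j := by
      intro j hj
      rcases eq_or_lt_of_le (abs_nonneg (v j)) with hz | hz
      · rw [← hz, mul_zero]; exact hgnn j
      · have hax : |v j| ≤ a := horder i0 hi0 j hj
        have := core_ineq hp hq0 hq1 hz hax
        rw [hr, div_mul_eq_mul_div, div_le_iff₀ ha0]
        calc g i0 * |v j| = |v j| * Real.log (1 + a ^ q / p) := by rw [hg, ha]; ring
          _ ≤ a * Real.log (1 + |v j| ^ q / p) := this
          _ = g j * a := by rw [hg]; ring
    have hl1 := h1 v hv hv0 S' hS'k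
    calc ∑ i ∈ S, g i ≤ ∑ i ∈ S', g i := hA
      _ ≤ ∑ i ∈ S', r * |v i| := Finset.sum_le_sum key1
      _ = r * ∑ i ∈ S', |v i| := by rw [Finset.mul_sum]
      _ ≤ r * (c * ∑ j ∈ S'ᶜ, |v j|) := mul_le_mul_of_nonneg_left hl1 hrnn
      _ = c * ∑ j ∈ S'ᶜ, r * |v j| := by
          rw [Finset.mul_sum, Finset.mul_sum, Finset.mul_sum]
          apply Finset.sum_congr rfl
          intro j _
          ring
      _ ≤ c * ∑ j ∈ S'ᶜ, g j := mul_le_mul_of_nonneg_left (Finset.sum_le_sum key2) hc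
      _ ≤ c * ∑ j ∈ Sᶜ, g j := mul_le_mul_of_nonneg_left hB hc

lemma l1_exists {m n k : ℕ} (A : Matrix (Fin m) (Fin n) ℝ)
    (hgood : ∀ v : Fin n → ℝ, A.mulVec v = 0 → v ≠ 0 → ∀ S : Finset (Fin n), S.card ≤ k →
      ∃ i ∈ Sᶜ, v i ≠ 0) :
    ∃ c : ℝ, 0 ≤ c ∧ ∀ v : Fin n → ℝ, A.mulVec v = 0 → v ≠ 0 → ∀ S : Finset (Fin n),
      S.card ≤ k → ∑ i ∈ S, |v i| ≤ c * ∑ i ∈ Sᶜ, |v i| := by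
  classical
  set K : Set (Fin n → ℝ) := {v | A.mulVec v = 0 ∧ ‖v‖ = 1} with hK
  have hmvc : Continuous fun v : Fin n → ℝ => A.mulVec v := by
    have := A.mulVecLin.continuous_of_finiteDimensional
    exact this
  have hKclosed : IsClosed K := by
    apply IsClosed.inter
    · exact isClosed_eq hmvc continuous_const
    · exact isClosed_eq continuous_norm continuous_const
  have hKbdd : Bornology.IsBounded K := by
    apply isBounded_iff_forall_norm_le.mpr
    exact ⟨1, fun v hv => le_of_eq hv.2⟩
  have hKcpt : IsCompact K := Metric.isCompact_of_isClosed_isBounded hKclosed hKbdd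
  have hden : ∀ S : Finset (Fin n), Continuous fun v : Fin n → ℝ => ∑ j ∈ Sᶜ, |v j| := by
    intro S
    exact continuous_finset_sum _ fun j _ => (continuous_apply j).abs
  have hmain : ∀ S : Finset (Fin n), ∃ C : ℝ, 0 ≤ C ∧ (S.card ≤ k →
      ∀ v ∈ K, ∑ i ∈ S, |v i| ≤ C * ∑ j ∈ Sᶜ, |v j|) := by
    intro S
    rcases Set.eq_empty_or_nonempty K with hKe | hKne
    · exact ⟨0, le_refl 0, fun _ v hv => by rw [hKe] at hv; exact absurd hv (Set.notMem_empty v)⟩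
    obtain ⟨v0, hv0K, hv0min'⟩ := hKcpt.exists_isMinOn hKne (hden S).continuousOn
    have hv0min : ∀ v ∈ K, (∑ j ∈ Sᶜ, |v0 j|) ≤ ∑ j ∈ Sᶜ, |v j| := fun v hv => hv0min' hv
    by_cases hSk : S.card ≤ k
    · have hv0ne : v0 ≠ 0 := by
        intro h
        have := hv0K.2
        rw [h, norm_zero] at this
        exact one_ne_zero this.symm
      obtain ⟨i1, hi1, hvi1⟩ := hgood v0 hv0K.1 hv0ne S hSk
      have hmpos : 0 < ∑ j ∈ Sᶜ, |v0 j| := by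
        have h1 : |v0 i1| ≤ ∑ j ∈ Sᶜ, |v0 j| :=
          Finset.single_le_sum (fun j _ => abs_nonneg (v0 j)) hi1
        have : 0 < |v0 i1| := abs_pos.mpr hvi1
        linarith
      set mden : ℝ := ∑ j ∈ Sᶜ, |v0 j| with hmden
      refine ⟨(n : ℝ) / mden, by positivity, fun _ v hv => ?_⟩
      have hnum : ∑ i ∈ S, |v i| ≤ (n : ℝ) := by
        calc ∑ i ∈ S, |v i| ≤ ∑ i : Fin n, |v i| :=
              Finset.sum_le_sum_of_subset_of_nonneg (Finset.subset_univ S)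
                (fun i _ _ => abs_nonneg (v i))
          _ ≤ ∑ _i : Fin n, (1 : ℝ) := by
              apply Finset.sum_le_sum
              intro i _
              calc |v i| = ‖v i‖ := (Real.norm_eq_abs (v i)).symm
                _ ≤ ‖v‖ := norm_le_pi_norm v i
                _ = 1 := hv.2
          _ = (n : ℝ) := by simp
      have hge : mden ≤ ∑ j ∈ Sᶜ, |v j| := hv0min v hv
      calc ∑ i ∈ S, |v i| ≤ (n : ℝ) := hnum
        _ = (n : ℝ) / mden * mden := by field_simp
        _ ≤ (n : ℝ) / mden * ∑ j ∈ Sᶜ, |v j| := by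
            apply mul_le_mul_of_nonneg_left hge (by positivity)
    · exact ⟨0, le_refl 0, fun h => absurd h hSk⟩
  choose C hC0 hC using hmain
  have hune : (Finset.univ : Finset (Finset (Fin n))).Nonempty := ⟨∅, Finset.mem_univ ∅⟩
  set c : ℝ := Finset.univ.sup' hune C with hc
  have hcge : ∀ S : Finset (Fin n), C S ≤ c := fun S => Finset.le_sup' C (Finset.mem_univ S)
  refine ⟨c, (hC0 ∅).trans (hcge ∅), fun v hv hvne S hSk => ?_⟩
  have hnv : 0 < ‖v‖ := norm_pos_iff.mpr hvne
  set w : Fin n → ℝ := ‖v‖⁻¹ • v with hw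
  have hwK : w ∈ K := by
    constructor
    · rw [hw, Matrix.mulVec_smul, hv, smul_zero]
    · exact norm_smul_inv_norm hvne
  have hwi : ∀ i, |w i| = ‖v‖⁻¹ * |v i| := by
    intro i
    rw [hw]
    simp [abs_mul, abs_of_nonneg (inv_nonneg.mpr hnv.le)]
  have h := hC S hSk w hwK
  simp only [hwi, ← Finset.mul_sum] at h
  have h2 : ‖v‖⁻¹ * ∑ i ∈ S, |v i| ≤ c * (‖v‖⁻¹ * ∑ j ∈ Sᶜ, |v j|) := by
    calc ‖v‖⁻¹ * ∑ i ∈ S, |v i| ≤ C S * (‖v‖⁻¹ * ∑ j ∈ Sᶜ, |v j|) := h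
      _ ≤ c * (‖v‖⁻¹ * ∑ j ∈ Sᶜ, |v j|) := by
          apply mul_le_mul_of_nonneg_right (hcge S)
          positivity
  have h3 := mul_le_mul_of_nonneg_left h2 hnv.le
  calc ∑ i ∈ S, |v i| = ‖v‖ * (‖v‖⁻¹ * ∑ i ∈ S, |v i|) := by field_simp
    _ ≤ ‖v‖ * (c * (‖v‖⁻¹ * ∑ j ∈ Sᶜ, |v j|)) := h3
    _ = c * ∑ j ∈ Sᶜ, |v j| := by
        rw [← mul_assoc, mul_comm ‖v‖ c, mul_assoc, ← mul_assoc ‖v‖, mul_inv_cancel₀ hnv.ne', one_mul]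

/-- Null space constant of `A` at order `k` relative to a norm-like function `F`. -/
noncomputable def nullSpaceConstant {m n : ℕ} (A : Matrix (Fin m) (Fin n) ℝ) (k : ℕ)
    (F : (Fin n → ℝ) → ℝ) : ℝ :=
  sInf {c : ℝ | 0 ≤ c ∧ ∀ v : Fin n → ℝ, A.mulVec v = 0 → v ≠ 0 →
    ∀ S : Finset (Fin n), S.card ≤ k →
      F (fun i => if i ∈ S then v i else 0) ≤ c * F (fun i => if i ∈ Sᶜ then v i else 0)}

/-- the h_{p,q}-null space constant is at most the ℓ₁ null space constant. -/
theorem hpq_nsc_le_l1_nsc (m n k : ℕ) (p q : ℝ)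
    (hp : 0 < p) (hq0 : 0 < q) (hq1 : q ≤ 1)
    (A : Matrix (Fin m) (Fin n) ℝ) :
    nullSpaceConstant A k (fun x => ∑ i, Real.log (1 + |x i| ^ q / p)) ≤
      nullSpaceConstant A k (fun x => ∑ i, |x i|) := by

  unfold nullSpaceConstant
  have hf0 : Real.log (1 + |(0:ℝ)| ^ q / p) = 0 := by
    rw [abs_zero, Real.zero_rpow hq0.ne', zero_div, add_zero, Real.log_one]
  have hmaskh : ∀ (v : Fin n → ℝ) (S : Finset (Fin n)),
      (∑ i, Real.log (1 + |if i ∈ S then v i else 0| ^ q / p)) =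
        ∑ i ∈ S, Real.log (1 + |v i| ^ q / p) :=
    fun v S => mask_sum v S (fun z => Real.log (1 + |z| ^ q / p)) hf0
  have hmask1 : ∀ (v : Fin n → ℝ) (S : Finset (Fin n)),
      (∑ i, |if i ∈ S then v i else 0|) = ∑ i ∈ S, |v i| :=
    fun v S => mask_sum v S (fun z => |z|) abs_zero
  set SL : Set ℝ := {c : ℝ | 0 ≤ c ∧ ∀ v : Fin n → ℝ, A.mulVec v = 0 → v ≠ 0 →
    ∀ S : Finset (Fin n), S.card ≤ k →
      (∑ i, |if i ∈ S then v i else 0|) ≤ c * ∑ i, |if i ∈ Sᶜ then v i else 0|} with hSL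
  set SH : Set ℝ := {c : ℝ | 0 ≤ c ∧ ∀ v : Fin n → ℝ, A.mulVec v = 0 → v ≠ 0 →
    ∀ S : Finset (Fin n), S.card ≤ k →
      (∑ i, Real.log (1 + |if i ∈ S then v i else 0| ^ q / p)) ≤
        c * ∑ i, Real.log (1 + |if i ∈ Sᶜ then v i else 0| ^ q / p)} with hSH
  have hincl : SL ⊆ SH := by
    intro c hc
    refine ⟨hc.1, fun v hv hv0 S hS => ?_⟩
    rw [hmaskh, hmaskh]
    apply mem_hpq hp hq0 hq1 hc.1 _ v hv hv0 S hS
    intro v' hv' hv0' S' hS'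
    have := hc.2 v' hv' hv0' S' hS'
    rwa [hmask1, hmask1] at this
  by_cases hbad : ∃ v : Fin n → ℝ, A.mulVec v = 0 ∧ v ≠ 0 ∧
      ∃ S : Finset (Fin n), S.card ≤ k ∧ ∀ i ∈ Sᶜ, v i = 0
  · obtain ⟨v, hv, hv0, S, hSk, hSz⟩ := hbad
    obtain ⟨i1, hvi1⟩ : ∃ i, v i ≠ 0 := by
      by_contra h
      push_neg at h
      exact hv0 (funext h)
    have hi1S : i1 ∈ S := by
      by_contra h
      exact hvi1 (hSz i1 (Finset.mem_compl.mpr h))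
    have hHempty : SH = ∅ := by
      rw [Set.eq_empty_iff_forall_notMem]
      rintro c ⟨hc0, hc⟩
      have h := hc v hv hv0 S hSk
      rw [hmaskh, hmaskh] at h
      have hz : ∑ i ∈ Sᶜ, Real.log (1 + |v i| ^ q / p) = 0 :=
        Finset.sum_eq_zero fun i hi => by rw [hSz i hi]; exact hf0
      rw [hz, mul_zero] at h
      have hpos : 0 < ∑ i ∈ S, Real.log (1 + |v i| ^ q / p) := by
        have h1 : 0 < Real.log (1 + |v i1| ^ q / p) := by
          apply Real.log_pos
          have : 0 < |v i1| ^ q / p := by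
            apply div_pos _ hp
            exact Real.rpow_pos_of_pos (abs_pos.mpr hvi1) q
          linarith
        have h2 : Real.log (1 + |v i1| ^ q / p) ≤ ∑ i ∈ S, Real.log (1 + |v i| ^ q / p) := by
          apply Finset.single_le_sum _ hi1S
          intro i _
          apply Real.log_nonneg
          have : 0 ≤ |v i| ^ q / p := by positivity
          linarith
        linarith
      linarith
    have hLempty : SL = ∅ := by
      rw [Set.eq_empty_iff_forall_notMem]
      rintro c ⟨hc0, hc⟩
      have h := hc v hv hv0 S hSk
      rw [hmask1, hmask1] at h
      have hz : ∑ i ∈ Sᶜ, |v i| = 0 :=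
        Finset.sum_eq_zero fun i hi => by rw [hSz i hi, abs_zero]
      rw [hz, mul_zero] at h
      have hpos : 0 < ∑ i ∈ S, |v i| := by
        have h1 : 0 < |v i1| := abs_pos.mpr hvi1
        have h2 : |v i1| ≤ ∑ i ∈ S, |v i| :=
          Finset.single_le_sum (fun i _ => abs_nonneg (v i)) hi1S
        linarith
      linarith
    rw [hHempty, hLempty]
  · push_neg at hbad
    have hgood : ∀ v : Fin n → ℝ, A.mulVec v = 0 → v ≠ 0 → ∀ S : Finset (Fin n),
        S.card ≤ k → ∃ i ∈ Sᶜ, v i ≠ 0 := by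
      intro v hv hv0 S hS
      have := hbad v hv hv0 S hS
      exact this
    obtain ⟨c0, hc00, hc0⟩ := l1_exists A hgood
    have hLne : SL.Nonempty := by
      refine ⟨c0, hc00, fun v hv hv0 S hS => ?_⟩
      rw [hmask1, hmask1]
      exact hc0 v hv hv0 S hS
    exact csInf_le_csInf ⟨0, fun x hx => hx.1⟩ hLne hincl
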